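/- In a goal-conditioned MDP with finite state space S, goal distribution p_g on S, step reward r(s, g) = 1{s = g}, and discount γ ∈ [0,1): for any policy π with discounted state-visitation-based marginal state distribution p_{I_π} in the data buffer, the value function satisfies V^π(s) ≤ (1 − D_TV(p_{I_π}, p_g)) / (1 − γ), where D_TV is the total variation distance. Equivalently, D_TV(p_{I_π}, p_g) ≤ 1 − (1−γ) V^π(s). -/
import Mathlib


open Finset

/-- In a goal-conditioned MDP with finite state space, reward `1{s = g}`,
goal distribution `pg` and stationary marginal state distribution `pI` induced by the
policy, the value function `V = ∑_{t≥0} γ^t P(s_t = g)` (with `s_t ∼ pI`, `g ∼ pg`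
independent) satisfies `V ≤ (1 − D_TV(pI, pg)) / (1 − γ)`; equivalently
`D_TV(pI, pg) ≤ 1 − (1−γ) V`. -/
theorem value_bounds_tv_distance {X : Type*} [Fintype X]
    (γ : ℝ) (hγ0 : 0 ≤ γ) (hγ1 : γ < 1)
    (pI pg : X → ℝ)
    (hpI0 : ∀ x, 0 ≤ pI x) (hpI1 : ∑ x, pI x = 1)
    (hpg0 : ∀ x, 0 ≤ pg x) (hpg1 : ∑ x, pg x = 1)
    (V : ℝ) (hV : V = ∑' t : ℕ, γ ^ t * ∑ x, pI x * pg x) :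
    V ≤ (1 - (1/2) * ∑ x, |pI x - pg x|) / (1 - γ) ∧
      (1/2) * ∑ x, |pI x - pg x| ≤ 1 - (1 - γ) * V := by
  have hγne : (1 : ℝ) - γ > 0 := by linarith
  -- V = S / (1-γ) where S = ∑ pI x * pg x
  set S := ∑ x, pI x * pg x with hS
  have hVeq : V = S / (1 - γ) := by
    rw [hV, tsum_mul_right, tsum_geometric_of_lt_one hγ0 hγ1]
    field_simp
  -- each prob ≤ 1
  have hle1 : ∀ (p : X → ℝ), (∀ x, 0 ≤ p x) → (∑ x, p x = 1) → ∀ x, p x ≤ 1 := by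
    intro p h0 h1 x
    have := Finset.single_le_sum (f := p) (fun i _ => h0 i) (Finset.mem_univ x)
    linarith [this]
  have hpI1' := hle1 pI hpI0 hpI1
  have hpg1' := hle1 pg hpg0 hpg1
  -- S ≤ ∑ min pI pg = 1 - TV
  have hmin : S ≤ ∑ x, min (pI x) (pg x) := by
    apply Finset.sum_le_sum
    intro x _
    rcases le_total (pI x) (pg x) with h | h
    · calc pI x * pg x ≤ pI x * 1 := by
            exact mul_le_mul_of_nonneg_left (hpg1' x) (hpI0 x)
        _ = pI x := mul_one _
        _ = min (pI x) (pg x) := (min_eq_left h).symm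
    · calc pI x * pg x ≤ 1 * pg x := by
            exact mul_le_mul_of_nonneg_right (hpI1' x) (hpg0 x)
        _ = pg x := one_mul _
        _ = min (pI x) (pg x) := (min_eq_right h).symm
  have hminval : ∑ x, min (pI x) (pg x) = 1 - (1/2) * ∑ x, |pI x - pg x| := by
    have : ∀ x : X, min (pI x) (pg x) = (pI x + pg x - |pI x - pg x|) / 2 := by
      intro x
      rcases le_total (pI x) (pg x) with h | h
      · rw [min_eq_left h, abs_of_nonpos (by linarith)]; ring
      · rw [min_eq_right h, abs_of_nonneg (by linarith)]; ring
    rw [Finset.sum_congr rfl (fun x _ => this x), ← Finset.sum_div,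
      Finset.sum_sub_distrib, Finset.sum_add_distrib, hpI1, hpg1]
    ring
  have hSle : S ≤ 1 - (1/2) * ∑ x, |pI x - pg x| := hminval ▸ hmin
  constructor
  · rw [hVeq]
    gcongr
  · have : (1 - γ) * V = S := by rw [hVeq]; field_simp
    linarith
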